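/- Let F be the free group with basis {ξ, η} and let φ be the automorphism of F with φ(ξ) = ξ and φ(η) = ηξ. If the reduced word of w ∈ F contains a subword of the form η ξ^m η for some integer m, then the reduced word of φ(w) also contains a subword of the form η ξ^{m'} η for some integer m'. -/

import Mathlib

open FreeGroup List

abbrev Ltr := Bool × Bool

def s : Ltr → List Ltr
  | (true, c) => [(true, c)]
  | (false, true) => [(false, true), (true, true)]
  | (false, false) => [(true, false), (false, false)]

def T : List Ltr → List Ltr
  | [] => []
  | [a] => s a
  | a :: b :: l =>
    if a = (false, true) ∧ b = (true, false) then (false, true) :: T l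
    else if a = (true, true) ∧ b = (false, false) then (false, false) :: T l
    else s a ++ T (b :: l)

def hd : Ltr → List Ltr → Ltr
  | (false, true), _ => (false, true)
  | (false, false), _ => (true, false)
  | (true, false), _ => (true, false)
  | (true, true), cs => if cs.head? = some (false, false) then (false, false) else (true, true)

lemma T_cons : ∀ (c : Ltr) (cs : List Ltr), T (c :: cs) = hd c cs :: (T (c :: cs)).tail := by
  rintro ⟨x, y⟩ (_ | ⟨⟨u, v⟩, cs⟩) <;>
    rcases x with _ | _ <;> rcases y with _ | _ <;>
    first
      | rfl
      | (rcases u with _ | _ <;> rcases v with _ | _ <;> (rw [T]; simp [s, hd]))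

abbrev P (a b : Ltr) : Prop := ¬(a.1 = b.1 ∧ a.2 = !b.2)

abbrev Red' (L : List Ltr) : Prop := List.IsChain P L

lemma reduce_eq_self : ∀ {L : List Ltr}, Red' L → FreeGroup.reduce L = L := by
  intro L h
  induction L with
  | nil => rfl
  | cons a l ih =>
    rw [FreeGroup.reduce.cons, ih (List.IsChain.tail h)]
    cases l with
    | nil => rfl
    | cons b t =>
      have hab : P a b := List.isChain_cons_cons.mp h |>.1
      simp only [P] at hab
      simp [hab]

lemma red'_reduce : ∀ (L : List Ltr), Red' (FreeGroup.reduce L) := by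
  intro L
  induction L with
  | nil => exact List.isChain_nil
  | cons a l ih =>
    rw [FreeGroup.reduce.cons]
    rcases h : FreeGroup.reduce l with _ | ⟨b, t⟩
    · exact List.isChain_singleton a
    · rw [h] at ih
      by_cases hc : a.1 = b.1 ∧ a.2 = !b.2
      · simp only [if_pos hc]
        exact ih.tail
      · simp only [if_neg hc]
        exact List.isChain_cons_cons.mpr ⟨hc, ih⟩

lemma red'_toWord (w : FreeGroup Bool) : Red' w.toWord := by
  rw [← FreeGroup.reduce_toWord]
  exact red'_reduce _

lemma hd_spec : ∀ (c : Ltr) (cs : List Ltr),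
    (hd c cs = (false, true) ∧ c = (false, true)) ∨
    (hd c cs = (false, false) ∧ c = (true, true)) ∨
    (hd c cs = (true, true) ∧ c = (true, true)) ∨
    (hd c cs = (true, false) ∧ (c = (true, false) ∨ c = (false, false))) := by
  rintro ⟨_|_, _|_⟩ cs
  · exact Or.inr (Or.inr (Or.inr ⟨rfl, Or.inr rfl⟩))
  · exact Or.inl ⟨rfl, rfl⟩
  · exact Or.inr (Or.inr (Or.inr ⟨rfl, Or.inl rfl⟩))
  · by_cases hc : cs.head? = some (false, false)
    · exact Or.inr (Or.inl ⟨by simp [hd, hc], rfl⟩)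
    · exact Or.inr (Or.inr (Or.inl ⟨by simp [hd, hc], rfl⟩))


lemma T_red' : ∀ (n : ℕ) (L : List Ltr), L.length ≤ n → Red' L → Red' (T L) := by
  intro n
  induction n with
  | zero =>
    intro L hL _
    rw [List.length_eq_zero_iff.mp (Nat.le_zero.mp hL)]
    exact List.isChain_nil
  | succ n ih =>
    rintro (_ | ⟨a, _ | ⟨b, l⟩⟩) hL h
    · exact List.isChain_nil
    · rcases a with ⟨_|_, _|_⟩ <;> simp [T, s, List.isChain_cons_cons, P]
    · rw [T]
      split_ifs with h1 h2
      · obtain ⟨ha, hb⟩ := h1; subst ha; subst hb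
        have ihl : Red' (T l) := ih l (by simp at hL ⊢; omega) h.tail.tail
        rcases l with _ | ⟨c, cs⟩
        · exact List.isChain_singleton _
        · rw [T_cons c cs] at ihl ⊢
          refine List.isChain_cons_cons.mpr ⟨?_, ihl⟩
          have hbc : P (true, false) c := (List.isChain_cons_cons.mp h.tail).1
          rcases hd_spec c cs with ⟨he, hc⟩ | ⟨he, hc⟩ | ⟨he, hc⟩ | ⟨he, hc | hc⟩ <;>
            subst hc <;> rw [he] <;>
            first
              | decide
              | exact absurd hbc (by decide)
      · obtain ⟨ha, hb⟩ := h2; subst ha; subst hb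
        have ihl : Red' (T l) := ih l (by simp at hL ⊢; omega) h.tail.tail
        rcases l with _ | ⟨c, cs⟩
        · exact List.isChain_singleton _
        · rw [T_cons c cs] at ihl ⊢
          refine List.isChain_cons_cons.mpr ⟨?_, ihl⟩
          have hbc : P (false, false) c := (List.isChain_cons_cons.mp h.tail).1
          rcases hd_spec c cs with ⟨he, hc⟩ | ⟨he, hc⟩ | ⟨he, hc⟩ | ⟨he, hc | hc⟩ <;>
            subst hc <;> rw [he] <;>
            first
              | decide
              | exact absurd hbc (by decide)
      · have ihbl : Red' (T (b :: l)) := ih (b :: l) (by simp at hL ⊢; omega) h.tail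
        rw [T_cons b l] at ihbl ⊢
        have hab : P a b := (List.isChain_cons_cons.mp h).1
        rcases a with ⟨_|_, _|_⟩ <;>
          · refine List.IsChain.append (by simp [s, List.isChain_cons_cons, P]) ihbl ?_
            rintro x hx y hy
            simp only [s, List.getLast?_singleton, List.getLast?_cons_cons,
              List.getLast?_singleton, Option.mem_def, Option.some.injEq] at hx
            rw [List.head?_cons, Option.mem_def, Option.some.injEq] at hy
            subst hx; subst hy
            rcases hd_spec b l with ⟨he, hc⟩ | ⟨he, hc⟩ | ⟨he, hc⟩ | ⟨he, hc | hc⟩ <;>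
              subst hc <;> rw [he] <;>
              first
                | decide
                | exact absurd hab (by decide)
                | exact (h1 ⟨rfl, rfl⟩).elim
                | exact (h2 ⟨rfl, rfl⟩).elim

/-- The Whitehead automorphism `ξ ↦ ξ, η ↦ ηξ` (as an endomorphism) of the free group on
`ξ = of true`, `η = of false`. -/
noncomputable def whitehead : FreeGroup Bool →* FreeGroup Bool :=
  FreeGroup.lift (fun b => if b then FreeGroup.of true
    else FreeGroup.of false * FreeGroup.of true)


lemma mk_single_false (x : Bool) : FreeGroup.mk [(x, false)] = (FreeGroup.of x)⁻¹ := by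
  rw [show FreeGroup.of x = FreeGroup.mk [(x, true)] from rfl, FreeGroup.inv_mk]
  simp [FreeGroup.invRev]

lemma wh_true : whitehead (FreeGroup.of true) = FreeGroup.of true := by
  simp [whitehead]

lemma wh_false : whitehead (FreeGroup.of false) =
    FreeGroup.of false * FreeGroup.of true := by
  simp [whitehead]

lemma wh_single : ∀ a : Ltr, whitehead (FreeGroup.mk [a]) = FreeGroup.mk (s a) := by
  rintro ⟨_|_, _|_⟩
  · show whitehead (FreeGroup.mk [(false, false)]) = _
    rw [mk_single_false, _root_.map_inv, wh_false, s]
    rw [show ([(true, false), (false, false)] : List Ltr) =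
      [(true, false)] ++ [(false, false)] from rfl, ← FreeGroup.mul_mk,
      mk_single_false, mk_single_false]
    group
  · show whitehead (FreeGroup.mk [(false, true)]) = _
    rw [show FreeGroup.mk [((false : Bool), true)] = FreeGroup.of false from rfl, wh_false, s]
    rw [show ([(false, true), (true, true)] : List Ltr) =
      [(false, true)] ++ [(true, true)] from rfl, ← FreeGroup.mul_mk]
    rfl
  · show whitehead (FreeGroup.mk [(true, false)]) = _
    rw [mk_single_false, _root_.map_inv, wh_true, s, mk_single_false]
  · show whitehead (FreeGroup.mk [(true, true)]) = _
    rw [show FreeGroup.mk [((true : Bool), true)] = FreeGroup.of true from rfl, wh_true]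
    rfl

lemma whitehead_mk : ∀ (n : ℕ) (L : List Ltr), L.length ≤ n →
    whitehead (FreeGroup.mk L) = FreeGroup.mk (T L) := by
  intro n
  induction n with
  | zero =>
    intro L hL
    rw [List.length_eq_zero_iff.mp (Nat.le_zero.mp hL)]
    rw [show T [] = [] from rfl, ← FreeGroup.one_eq_mk, _root_.map_one]
  | succ n ih =>
    rintro (_ | ⟨a, _ | ⟨b, l⟩⟩) hL
    · rw [show T [] = [] from rfl, ← FreeGroup.one_eq_mk, _root_.map_one]
    · exact wh_single a
    · have e1 : FreeGroup.mk (a :: b :: l) =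
          FreeGroup.mk [a] * (FreeGroup.mk [b] * FreeGroup.mk l) := by
        rw [FreeGroup.mul_mk, FreeGroup.mul_mk]; rfl
      have ihl := ih l (by simp at hL ⊢; omega)
      have ihbl := ih (b :: l) (by simp at hL ⊢; omega)
      rw [T]
      split_ifs with h1 h2
      · obtain ⟨ha, hb⟩ := h1; subst ha; subst hb
        rw [e1, _root_.map_mul, _root_.map_mul, wh_single, wh_single,
          show FreeGroup.mk ((false, true) :: T l) =
            FreeGroup.mk [(false, true)] * FreeGroup.mk (T l) from
            by rw [FreeGroup.mul_mk, List.singleton_append], ← ihl]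
        rw [show s (false, true) = [(false, true)] ++ [(true, true)] from rfl,
          ← FreeGroup.mul_mk, show s (true, false) = [(true, false)] from rfl,
          mk_single_false, show FreeGroup.mk [((true : Bool), true)] = FreeGroup.of true from rfl]
        group
      · obtain ⟨ha, hb⟩ := h2; subst ha; subst hb
        rw [e1, _root_.map_mul, _root_.map_mul, wh_single, wh_single,
          show FreeGroup.mk ((false, false) :: T l) =
            FreeGroup.mk [(false, false)] * FreeGroup.mk (T l) from
            by rw [FreeGroup.mul_mk, List.singleton_append], ← ihl]
        rw [show s (false, false) = [(true, false)] ++ [(false, false)] from rfl,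
          ← FreeGroup.mul_mk, show s (true, true) = [(true, true)] from rfl,
          mk_single_false, mk_single_false,
          show FreeGroup.mk [((true : Bool), true)] = FreeGroup.of true from rfl]
        group
      · rw [show FreeGroup.mk (a :: b :: l) = FreeGroup.mk ([a] ++ b :: l) from rfl,
          ← FreeGroup.mul_mk, _root_.map_mul, wh_single, ihbl, FreeGroup.mul_mk]

def xw (m : ℤ) : List Ltr :=
  if 0 ≤ m then List.replicate m.toNat (true, true) else List.replicate (-m).toNat (true, false)

def patW (m : ℤ) : List Ltr := (false, true) :: (xw m ++ [(false, true)])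

lemma powMkRep (n : ℕ) : (FreeGroup.of true) ^ n = FreeGroup.mk (List.replicate n (true, true)) := by
  rw [← FreeGroup.toWord_of_pow true n, FreeGroup.mk_toWord]

lemma zpow_mk : ∀ m : ℤ, (FreeGroup.of true) ^ m = FreeGroup.mk (xw m)
  | Int.ofNat n => by
    rw [Int.ofNat_eq_coe, zpow_natCast, powMkRep, xw, if_pos (by positivity)]
    simp
  | Int.negSucc n => by
    rw [zpow_negSucc, powMkRep, FreeGroup.inv_mk, xw,
      if_neg (by rw [Int.negSucc_eq]; omega)]
    simp [FreeGroup.invRev, Int.neg_negSucc]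

lemma pat_mk (m : ℤ) : FreeGroup.of false * (FreeGroup.of true) ^ m * FreeGroup.of false =
    FreeGroup.mk (patW m) := by
  rw [zpow_mk, show FreeGroup.of false = FreeGroup.mk [(false, true)] from rfl,
    FreeGroup.mul_mk, FreeGroup.mul_mk, patW]
  simp

lemma chain_rep : ∀ (k : ℕ) (c : Bool),
    List.IsChain P (List.replicate k (true, c) ++ [(false, true)]) := by
  intro k c
  induction k with
  | zero => simp
  | succ k ih =>
    rw [List.replicate_succ, List.cons_append]
    refine List.isChain_cons.mpr ⟨?_, ih⟩
    intro x hx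
    cases k with
    | zero => simp at hx; subst hx; simp [P]
    | succ k =>
      rw [List.replicate_succ, List.cons_append, List.head?_cons, Option.mem_def,
        Option.some.injEq] at hx
      subst hx; simp [P]

lemma pat_red (m : ℤ) : Red' (patW m) := by
  have h : ∃ k c, xw m = List.replicate k (true, c) := by
    rw [xw]; split_ifs <;> exact ⟨_, _, rfl⟩
  obtain ⟨k, c, hk⟩ := h
  rw [patW, hk]
  refine List.isChain_cons.mpr ⟨?_, chain_rep k c⟩
  intro x hx
  cases k with
  | zero => simp at hx; subst hx; simp [P]
  | succ k =>
    rw [List.replicate_succ, List.cons_append, List.head?_cons, Option.mem_def,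
      Option.some.injEq] at hx
    subst hx; simp [P]

lemma toWord_pat (m : ℤ) :
    (FreeGroup.of false * (FreeGroup.of true : FreeGroup Bool) ^ m *
      FreeGroup.of false).toWord = patW m := by
  rw [pat_mk, FreeGroup.toWord_mk, reduce_eq_self (pat_red m)]

lemma T_eta_head (S : List Ltr) :
    T ((false, true) :: S) = (false, true) :: (T ((false, true) :: S)).tail :=
  T_cons (false, true) S

lemma T_rep_true : ∀ (k : ℕ) (S : List Ltr),
    T (List.replicate k (true, true) ++ (false, true) :: S) =
      List.replicate k (true, true) ++ T ((false, true) :: S) := by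
  intro k
  induction k with
  | zero => simp
  | succ k ih =>
    intro S
    rw [List.replicate_succ, List.cons_append]
    cases k with
    | zero =>
      simp only [List.replicate_zero, List.nil_append]
      rw [T]
      norm_num [s]
    | succ k =>
      rw [List.replicate_succ, List.cons_append, T]
      norm_num [s]
      rw [← List.cons_append, ← List.replicate_succ, ih]
      simp [List.replicate_succ]

lemma T_rep_false : ∀ (k : ℕ) (S : List Ltr),
    T (List.replicate k (true, false) ++ (false, true) :: S) =
      List.replicate k (true, false) ++ T ((false, true) :: S) := by
  intro k
  induction k with
  | zero => simp
  | succ k ih =>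
    intro S
    rw [List.replicate_succ, List.cons_append]
    cases k with
    | zero =>
      simp only [List.replicate_zero, List.nil_append]
      rw [T]
      norm_num [s]
    | succ k =>
      rw [List.replicate_succ, List.cons_append, T]
      norm_num [s]
      rw [← List.cons_append, ← List.replicate_succ, ih]
      simp [List.replicate_succ]

lemma xw_nat (k : ℕ) : xw (k : ℤ) = List.replicate k (true, true) := by
  rw [xw, if_pos (Int.natCast_nonneg k)]; simp

lemma T_pat_prefix : ∀ (m : ℤ) (S : List Ltr), ∃ m', patW m' <+: T (patW m ++ S) := by
  rintro (n | n) S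
  · -- m = n ≥ 0
    simp only [Int.ofNat_eq_coe]
    rw [show patW (n : ℤ) ++ S =
      (false, true) :: (List.replicate n (true, true) ++ (false, true) :: S) from by
        simp [patW, xw_nat]]
    refine ⟨((n + 1 : ℕ) : ℤ), ?_⟩
    rw [patW, xw_nat]
    cases n with
    | zero =>
      simp only [List.replicate_zero, List.nil_append]
      rw [T]
      norm_num [s]
      rw [T_eta_head S]
      exact ⟨(T ((false, true) :: S)).tail, by simp [List.replicate_succ]⟩
    | succ n =>
      have hT : T ((false, true) ::
          (List.replicate (n + 1) (true, true) ++ (false, true) :: S)) =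
          (false, true) :: ((true, true) :: List.replicate (n + 1) (true, true)) ++
            (false, true) :: (T ((false, true) :: S)).tail := by
        rw [List.replicate_succ, List.cons_append, T]
        norm_num [s]
        rw [← List.cons_append, ← List.replicate_succ, T_rep_true, T_eta_head S]
        simp [List.replicate_succ]
      rw [hT]
      refine ⟨(T ((false, true) :: S)).tail, ?_⟩
      simp [List.replicate_succ]
  · -- m = negSucc n
    have hxw : xw (Int.negSucc n) = List.replicate (n + 1) (true, false) := by
      rw [xw, if_neg (by rw [Int.negSucc_eq]; omega)]
      simp [Int.neg_negSucc]
    rw [patW, hxw, List.cons_append, List.append_assoc, List.singleton_append,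
      List.replicate_succ, List.cons_append, T, if_pos ⟨rfl, rfl⟩,
      T_rep_false, T_eta_head S]
    cases n with
    | zero =>
      refine ⟨0, (T ((false, true) :: S)).tail, ?_⟩
      simp [patW, xw]
    | succ n =>
      refine ⟨Int.negSucc n, (T ((false, true) :: S)).tail, ?_⟩
      have hxw2 : xw (Int.negSucc n) = List.replicate (n + 1) (true, false) := by
        rw [xw, if_neg (by rw [Int.negSucc_eq]; omega)]
        simp [Int.neg_negSucc]
      simp [patW, hxw2]

lemma infixT : ∀ (n : ℕ) (Pre S : List Ltr) (m : ℤ), Pre.length ≤ n →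
    ∃ m', patW m' <:+: T (Pre ++ (patW m ++ S)) := by
  intro n
  induction n with
  | zero =>
    intro Pre S m hP
    rw [List.length_eq_zero_iff.mp (Nat.le_zero.mp hP), List.nil_append]
    obtain ⟨m', h⟩ := T_pat_prefix m S
    exact ⟨m', h.isInfix⟩
  | succ n ih =>
    rintro (_ | ⟨a, Pre⟩) S m hP
    · rw [List.nil_append]
      obtain ⟨m', h⟩ := T_pat_prefix m S
      exact ⟨m', h.isInfix⟩
    · have hne : Pre ++ (patW m ++ S) ≠ [] := by simp [patW]
      obtain ⟨b, rest, hbr⟩ := List.exists_cons_of_ne_nil hne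
      rw [List.cons_append, hbr, T]
      split_ifs with h1 h2
      · cases Pre with
        | nil =>
          exfalso
          rw [List.nil_append, patW, List.cons_append] at hbr
          injection hbr with hb _
          rw [← hb] at h1
          exact absurd h1.2 (by decide)
        | cons c Pre' =>
          rw [List.cons_append] at hbr
          injection hbr with hb hrest
          obtain ⟨m', h⟩ := ih Pre' S m (by simp at hP; omega)
          rw [← hrest]
          exact ⟨m', h.trans (List.suffix_cons _ _).isInfix⟩
      · cases Pre with
        | nil =>
          exfalso
          rw [List.nil_append, patW, List.cons_append] at hbr
          injection hbr with hb _
          rw [← hb] at h2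
          exact absurd h2.2 (by decide)
        | cons c Pre' =>
          rw [List.cons_append] at hbr
          injection hbr with hb hrest
          obtain ⟨m', h⟩ := ih Pre' S m (by simp at hP; omega)
          rw [← hrest]
          exact ⟨m', h.trans (List.suffix_cons _ _).isInfix⟩
      · rw [← hbr]
        obtain ⟨m', h⟩ := ih Pre S m (by simp at hP; omega)
        exact ⟨m', h.trans (List.suffix_append _ _).isInfix⟩

/-- If the reduced word of `w` contains a subword `η ξ^m η`, then the reduced word of the image
of `w` under the Whitehead automorphism `ξ ↦ ξ, η ↦ ηξ` contains a subword `η ξ^{m'} η`. -/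
theorem whitehead_preserves_eta_xi_eta (w : FreeGroup Bool)
    (hw : ∃ m : ℤ,
      (FreeGroup.of false * (FreeGroup.of true : FreeGroup Bool) ^ m *
        FreeGroup.of false).toWord <:+: w.toWord) :
    ∃ m' : ℤ,
      (FreeGroup.of false * (FreeGroup.of true : FreeGroup Bool) ^ m' *
        FreeGroup.of false).toWord <:+: (whitehead w).toWord := by
  obtain ⟨m, hm⟩ := hw
  rw [toWord_pat] at hm
  obtain ⟨Pre, S, hPS⟩ := hm
  have hT : (whitehead w).toWord = T w.toWord := by
    conv_lhs => rw [← FreeGroup.mk_toWord (x := w)]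
    rw [whitehead_mk w.toWord.length w.toWord le_rfl, FreeGroup.toWord_mk,
      reduce_eq_self (T_red' w.toWord.length w.toWord le_rfl (red'_toWord w))]
  obtain ⟨m', h⟩ := infixT Pre.length Pre S m le_rfl
  refine ⟨m', ?_⟩
  rw [toWord_pat, hT, ← hPS, List.append_assoc]
  exact h
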